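/- Let A ∈ H(d; l_1,…,l_r) have exactly l distinct eigenvalues and a spectral decomposition A = P D P* with P a d×d unitary matrix and D a d×d real diagonal matrix. Then for every ε > 0 there exists δ > 0 such that every B ∈ H(d; l_1,…,l_r) with max_{1≤i,j≤d} |A_{i,j} − B_{i,j}| < δ has exactly l distinct eigenvalues and admits a spectral decomposition B = Q F Q* with Q a d×d unitary matrix and F a d×d real diagonal matrix satisfying max_{1≤i≤d} |D_{i,i} − F_{i,i}| < ε and max_{1≤i,j≤d} |Q_{i,j} − P_{i,j}| < ε. -/

import Mathlib

open Matrix Finset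

noncomputable section

/-- `hasCollision ll μ` : there are pairwise disjoint index sets `J 1, …, J r` with
`|J j| = l j` on which the values of `μ` coincide. -/
def hasCollision {d r : ℕ} (ll : Fin r → ℕ) (μ : Fin d → ℝ) : Prop :=
  ∃ J : Fin r → Finset (Fin d),
    (∀ j j' : Fin r, j ≠ j' → Disjoint (J j) (J j')) ∧
    (∀ j, (J j).card = ll j) ∧
    (∀ j : Fin r, ∀ i ∈ J j, ∀ i' ∈ J j, μ i = μ i')

/-- `H(d; l_1, …, l_r)` : complex Hermitian `d × d` matrices having, for each `j`, `l_j`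
(real) eigenvalues (with multiplicity) which coincide, over pairwise disjoint index sets. -/
def HermCollide (d r : ℕ) (ll : Fin r → ℕ) : Set (Matrix (Fin d) (Fin d) ℂ) :=
  {x | ∃ (μ : Fin d → ℝ) (P : Matrix (Fin d) (Fin d) ℂ),
    P * Pᴴ = 1 ∧ Pᴴ * P = 1 ∧
    x = P * Matrix.diagonal (fun i => ((μ i : ℝ) : ℂ)) * Pᴴ ∧ hasCollision ll μ}

open Filter Topology

namespace Stmt13Aux

variable {d : ℕ}

lemma entry_norm_le_one {Q : Matrix (Fin d) (Fin d) ℂ} (h : Q * Qᴴ = 1) (i j : Fin d) :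
    ‖Q i j‖ ≤ 1 := by
  have h1 : ∑ k, Q i k * star (Q i k) = 1 := by
    have h0 := congrArg (fun M : Matrix (Fin d) (Fin d) ℂ => M i i) h
    simpa [Matrix.mul_apply, Matrix.conjTranspose_apply, Matrix.one_apply] using h0
  have h2 : ∑ k, Complex.normSq (Q i k) = 1 := by
    have : ((∑ k, Complex.normSq (Q i k) : ℝ) : ℂ) = ((1 : ℝ) : ℂ) := by
      push_cast
      rw [← h1]
      exact Finset.sum_congr rfl fun k _ => (Complex.mul_conj (Q i k)).symm
    exact_mod_cast this
  have h3 : Complex.normSq (Q i j) ≤ 1 :=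
    h2 ▸ Finset.single_le_sum (fun k _ => Complex.normSq_nonneg _) (Finset.mem_univ j)
  have h4 : ‖Q i j‖ ^ 2 = Complex.normSq (Q i j) := by
    rw [Complex.sq_norm]
  nlinarith [norm_nonneg (Q i j)]

lemma mu_entry_bound {Q Bm : Matrix (Fin d) (Fin d) ℂ} {μ : Fin d → ℝ}
    (h1 : Q * Qᴴ = 1) (h2 : Qᴴ * Q = 1)
    (hB : Bm = Q * Matrix.diagonal (fun i => ((μ i : ℝ) : ℂ)) * Qᴴ) (i : Fin d) :
    |μ i| ≤ ∑ a, ∑ b, ‖Bm a b‖ := by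
  have hd : Matrix.diagonal (fun i => ((μ i : ℝ) : ℂ)) = Qᴴ * Bm * Q := by
    rw [hB]
    have e1 : Qᴴ * (Q * Matrix.diagonal (fun i => ((μ i : ℝ) : ℂ)) * Qᴴ) * Q
        = (Qᴴ * Q) * Matrix.diagonal (fun i => ((μ i : ℝ) : ℂ)) * (Qᴴ * Q) := by
      simp only [Matrix.mul_assoc]
    rw [e1, h2, one_mul, mul_one]
  have hμi : ((μ i : ℝ) : ℂ) = (Qᴴ * Bm * Q) i i := by
    rw [← hd, Matrix.diagonal_apply_eq]
  have hb : ‖((μ i : ℝ) : ℂ)‖ ≤ ∑ a, ∑ b, ‖Bm b a‖ := by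
    rw [hμi, Matrix.mul_apply]
    refine le_trans (norm_sum_le _ _) (Finset.sum_le_sum fun a _ => ?_)
    calc ‖(Qᴴ * Bm) i a * Q a i‖ = ‖(Qᴴ * Bm) i a‖ * ‖Q a i‖ := norm_mul _ _
    _ ≤ ‖(Qᴴ * Bm) i a‖ * 1 :=
        mul_le_mul_of_nonneg_left (entry_norm_le_one h1 a i) (norm_nonneg _)
    _ = ‖∑ b, star (Q b i) * Bm b a‖ := by
        rw [mul_one, Matrix.mul_apply]
        simp only [Matrix.conjTranspose_apply]
    _ ≤ ∑ b, ‖star (Q b i) * Bm b a‖ := norm_sum_le _ _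
    _ ≤ ∑ b, ‖Bm b a‖ := by
        refine Finset.sum_le_sum fun b _ => ?_
        rw [norm_mul, norm_star]
        calc ‖Q b i‖ * ‖Bm b a‖ ≤ 1 * ‖Bm b a‖ :=
            mul_le_mul_of_nonneg_right (entry_norm_le_one h1 b i) (norm_nonneg _)
        _ = ‖Bm b a‖ := one_mul _
  rw [Complex.norm_real, Real.norm_eq_abs] at hb
  calc |μ i| ≤ ∑ a, ∑ b, ‖Bm b a‖ := hb
  _ = ∑ a, ∑ b, ‖Bm a b‖ := Finset.sum_comm

lemma collision_image_card {r : ℕ} {ll : Fin r → ℕ}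
    {μ : Fin d → ℝ} (h : hasCollision ll μ) :
    (Finset.univ.image μ).card + ∑ j, ll j ≤ d + r := by
  classical
  obtain ⟨J, hdisj, hcard, hconst⟩ := h
  set T : Finset (Fin d) := Finset.univ.biUnion J with hT
  have hTcard : T.card = ∑ j, ll j := by
    rw [hT, Finset.card_biUnion (fun x _ y _ hxy => hdisj x y hxy)]
    simp [hcard]
  have hsub : Finset.univ.image μ ⊆ (T.image μ) ∪ (Tᶜ.image μ) := by
    intro x hx
    obtain ⟨b, _, rfl⟩ := Finset.mem_image.mp hx
    by_cases hbT : b ∈ T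
    · exact Finset.mem_union_left _ (Finset.mem_image_of_mem _ hbT)
    · exact Finset.mem_union_right _ (Finset.mem_image_of_mem _ (Finset.mem_compl.mpr hbT))
  have hTimg : (T.image μ).card ≤ r := by
    have hsub2 : T.image μ ⊆ Finset.univ.biUnion fun j => (J j).image μ := by
      intro x hx
      obtain ⟨b, hb, rfl⟩ := Finset.mem_image.mp hx
      obtain ⟨j, _, hbj⟩ := Finset.mem_biUnion.mp hb
      exact Finset.mem_biUnion.mpr ⟨j, Finset.mem_univ _, Finset.mem_image_of_mem _ hbj⟩
    calc (T.image μ).card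
        ≤ (Finset.univ.biUnion fun j => (J j).image μ).card := Finset.card_le_card hsub2
    _ ≤ ∑ j, ((J j).image μ).card := Finset.card_biUnion_le
    _ ≤ ∑ _j : Fin r, 1 := by
        refine Finset.sum_le_sum fun j _ => Finset.card_le_one.mpr ?_
        intro a ha b hb
        obtain ⟨ia, hia, rfl⟩ := Finset.mem_image.mp ha
        obtain ⟨ib, hib, rfl⟩ := Finset.mem_image.mp hb
        exact hconst j ia hia ib hib
    _ = r := by simp
  have hcompl : (Tᶜ.image μ).card ≤ d - ∑ j, ll j := by
    calc (Tᶜ.image μ).card ≤ Tᶜ.card := Finset.card_image_le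
    _ = d - T.card := by rw [Finset.card_compl]; simp
    _ = d - ∑ j, ll j := by rw [hTcard]
  have hTle : T.card ≤ d := by
    calc T.card ≤ (Finset.univ : Finset (Fin d)).card := Finset.card_le_card (Finset.subset_univ _)
    _ = d := by simp
  have hc1 := Finset.card_le_card hsub
  have hc2 := Finset.card_union_le (T.image μ) (Tᶜ.image μ)
  omega

lemma spectrum_unitary_diag {Q : Matrix (Fin d) (Fin d) ℂ} (h1 : Q * Qᴴ = 1) (h2 : Qᴴ * Q = 1)
    (μ : Fin d → ℝ) :
    (spectrum ℂ (Q * Matrix.diagonal (fun i => ((μ i : ℝ) : ℂ)) * Qᴴ)).ncard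
      = (Finset.univ.image μ).card := by
  classical
  let u : (Matrix (Fin d) (Fin d) ℂ)ˣ := ⟨Q, Qᴴ, h1, h2⟩
  have he : Q * Matrix.diagonal (fun i => ((μ i : ℝ) : ℂ)) * Qᴴ
      = (u : Matrix (Fin d) (Fin d) ℂ) * Matrix.diagonal (fun i => ((μ i : ℝ) : ℂ))
        * ((u⁻¹ : (Matrix (Fin d) (Fin d) ℂ)ˣ) : Matrix (Fin d) (Fin d) ℂ) := rfl
  rw [he, spectrum.units_conjugate, spectrum_diagonal]
  have hr : (Set.range fun i => ((μ i : ℝ) : ℂ)) = (fun x : ℝ => (x : ℂ)) '' Set.range μ := by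
    rw [← Set.range_comp]; rfl
  rw [hr, Set.ncard_image_of_injective _ Complex.ofReal_injective]
  rw [show Set.range μ = ↑(Finset.univ.image μ) by simp]
  exact Set.ncard_coe_finset _

lemma image_card_le_and_pattern {f g : Fin d → ℝ}
    (hfg : ∀ b b', f b = f b' → g b = g b') :
    (Finset.univ.image g).card ≤ (Finset.univ.image f).card ∧
      ((Finset.univ.image f).card ≤ (Finset.univ.image g).card →
        ∀ b b', g b = g b' → f b = f b') := by
  classical
  set φ : ℝ → ℝ := fun x => if h : ∃ b, f b = x then g h.choose else 0 with hφ
  have key : ∀ b, φ (f b) = g b := by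
    intro b
    have h : ∃ b', f b' = f b := ⟨b, rfl⟩
    simp only [hφ, dif_pos h]
    exact hfg _ _ h.choose_spec
  have h1 : (Finset.univ.image f).image φ = Finset.univ.image g := by
    rw [Finset.image_image]
    exact Finset.image_congr fun b _ => key b
  constructor
  · rw [← h1]; exact Finset.card_image_le
  · intro hc b b' hgb
    have hcardeq : ((Finset.univ.image f).image φ).card = (Finset.univ.image f).card := by
      have hle : ((Finset.univ.image f).image φ).card ≤ (Finset.univ.image f).card :=
        Finset.card_image_le
    -- card image g = card (image φ ...) and hc gives ≥
      have hle2 : (Finset.univ.image g).card ≤ (Finset.univ.image f).card := h1 ▸ hle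
      rw [h1]
      omega
    have hinj := Finset.injOn_of_card_image_eq hcardeq
    have hfb : f b ∈ Finset.univ.image f := Finset.mem_image_of_mem _ (Finset.mem_univ _)
    have hfb' : f b' ∈ Finset.univ.image f := Finset.mem_image_of_mem _ (Finset.mem_univ _)
    refine hinj (Finset.mem_coe.mpr hfb) (Finset.mem_coe.mpr hfb') ?_
    rw [key b, key b', hgb]

end Stmt13Aux

open Stmt13Aux

set_option maxHeartbeats 1000000

/-- continuity of the spectral decomposition on `H(d; l_1, …, l_r)` near a
matrix `A` with exactly `l = d - ∑_j (l_j - 1)` distinct eigenvalues. -/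
theorem stmt13 (d r : ℕ) (hd : 2 ≤ d) (hr : 1 ≤ r) (ll : Fin r → ℕ)
    (hll : ∀ j, 2 ≤ ll j ∧ ll j ≤ d) (hsum : ∑ j, ll j ≤ d)
    (A : Matrix (Fin d) (Fin d) ℂ) (hA : A ∈ HermCollide d r ll)
    (P : Matrix (Fin d) (Fin d) ℂ) (D : Fin d → ℝ)
    (hP : P * Pᴴ = 1 ∧ Pᴴ * P = 1)
    (hPD : A = P * Matrix.diagonal (fun i => ((D i : ℝ) : ℂ)) * Pᴴ)
    (hAspec : (spectrum ℂ A).ncard = d + r - ∑ j, ll j)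
    (ε : ℝ) (hε : 0 < ε) :
    ∃ δ > (0 : ℝ), ∀ B ∈ HermCollide d r ll,
      (∀ i j : Fin d, ‖A i j - B i j‖ < δ) →
      (spectrum ℂ B).ncard = d + r - ∑ j, ll j ∧
      ∃ (Q : Matrix (Fin d) (Fin d) ℂ) (F : Fin d → ℝ),
        Q * Qᴴ = 1 ∧ Qᴴ * Q = 1 ∧
        B = Q * Matrix.diagonal (fun i => ((F i : ℝ) : ℂ)) * Qᴴ ∧
        (∀ i : Fin d, |D i - F i| < ε) ∧ (∀ i j : Fin d, ‖Q i j - P i j‖ < ε) := by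
  classical
  by_contra hcontra
  have hcon : ∀ δ : ℝ, 0 < δ → ∃ B ∈ HermCollide d r ll,
      (∀ i j : Fin d, ‖A i j - B i j‖ < δ) ∧
      ¬((spectrum ℂ B).ncard = d + r - ∑ j, ll j ∧
        ∃ (Q : Matrix (Fin d) (Fin d) ℂ) (F : Fin d → ℝ),
          Q * Qᴴ = 1 ∧ Qᴴ * Q = 1 ∧
          B = Q * Matrix.diagonal (fun i => ((F i : ℝ) : ℂ)) * Qᴴ ∧
          (∀ i : Fin d, |D i - F i| < ε) ∧ (∀ i j : Fin d, ‖Q i j - P i j‖ < ε)) := by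
    intro δ hδ
    by_contra hno
    push_neg at hno
    exact hcontra ⟨δ, hδ, hno⟩
  have hseq : ∀ n : ℕ, ∃ B, B ∈ HermCollide d r ll ∧
      (∀ i j : Fin d, ‖A i j - B i j‖ < 1 / ((n : ℝ) + 1)) ∧
      ¬((spectrum ℂ B).ncard = d + r - ∑ j, ll j ∧
        ∃ (Q : Matrix (Fin d) (Fin d) ℂ) (F : Fin d → ℝ),
          Q * Qᴴ = 1 ∧ Qᴴ * Q = 1 ∧
          B = Q * Matrix.diagonal (fun i => ((F i : ℝ) : ℂ)) * Qᴴ ∧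
          (∀ i : Fin d, |D i - F i| < ε) ∧ (∀ i j : Fin d, ‖Q i j - P i j‖ < ε)) := by
    intro n
    obtain ⟨B, hB1, hB2, hB3⟩ := hcon (1 / ((n : ℝ) + 1)) (by positivity)
    exact ⟨B, hB1, hB2, hB3⟩
  choose B hBH hBclose hBbad using hseq
  have hBH' : ∀ n, ∃ (μ : Fin d → ℝ) (Q : Matrix (Fin d) (Fin d) ℂ),
      Q * Qᴴ = 1 ∧ Qᴴ * Q = 1 ∧
      B n = Q * Matrix.diagonal (fun i => ((μ i : ℝ) : ℂ)) * Qᴴ ∧ hasCollision ll μ := hBH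
  choose μs Qs hQ1 hQ2 hBeq hcoll using hBH'
  -- pigeonhole on equality patterns
  have hfreq : ∃ R : Fin d → Fin d → Bool, ∃ᶠ n in Filter.atTop,
      (fun b b' => decide (μs n b = μs n b')) = R := by
    by_contra hnf
    push_neg at hnf
    have hev : ∀ᶠ n in Filter.atTop, ∀ R : Fin d → Fin d → Bool,
        (fun b b' => decide (μs n b = μs n b')) ≠ R := by
      rw [Filter.eventually_all]
      intro R
      exact hnf R
    obtain ⟨n, hn⟩ := hev.exists
    exact hn _ rfl
  obtain ⟨R, hR⟩ := hfreq
  obtain ⟨ψ, hψ, hψR⟩ := Filter.extraction_of_frequently_atTop hR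
  -- bounds
  have hQbd : ∀ n i j, ‖Qs n i j‖ ≤ 1 := fun n => entry_norm_le_one (hQ1 n)
  have hBbd : ∀ n a b, ‖B n a b‖ ≤ ‖A a b‖ + 1 := by
    intro n a b
    have h1 := hBclose n a b
    have h2 : (1 : ℝ) / ((n : ℝ) + 1) ≤ 1 := by
      rw [div_le_one (by positivity)]
      have : (0 : ℝ) ≤ (n : ℝ) := Nat.cast_nonneg n
      linarith
    have h3 : ‖B n a b‖ - ‖A a b‖ ≤ ‖B n a b - A a b‖ := norm_sub_norm_le _ _
    rw [norm_sub_rev] at h3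
    linarith
  set CA : ℝ := ∑ a : Fin d, ∑ b : Fin d, (‖A a b‖ + 1) with hCAdef
  have hCA : 0 ≤ CA := Finset.sum_nonneg fun a _ => Finset.sum_nonneg fun b _ => by positivity
  have hμbd : ∀ n i, |μs n i| ≤ CA := by
    intro n i
    refine le_trans (mu_entry_bound (hQ1 n) (hQ2 n) (hBeq n) i) ?_
    exact Finset.sum_le_sum fun a _ => Finset.sum_le_sum fun b _ => hBbd n a b
  -- Bolzano-Weierstrass
  have hxmem : ∀ k, ((fun k => ((fun i j => Qs (ψ k) i j, μs (ψ k)) :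
      (Fin d → Fin d → ℂ) × (Fin d → ℝ))) k)
      ∈ Metric.closedBall (0 : (Fin d → Fin d → ℂ) × (Fin d → ℝ)) (CA + 1) := by
    intro k
    rw [Metric.mem_closedBall, dist_zero_right, Prod.norm_def]
    apply max_le
    · rw [pi_norm_le_iff_of_nonneg (by linarith)]
      intro i
      rw [pi_norm_le_iff_of_nonneg (by linarith)]
      intro j
      exact le_trans (hQbd (ψ k) i j) (by linarith)
    · rw [pi_norm_le_iff_of_nonneg (by linarith)]
      intro i
      rw [Real.norm_eq_abs]
      exact le_trans (hμbd (ψ k) i) (by linarith)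
  obtain ⟨lim, -, φ, hφ, hconv⟩ :=
    (isCompact_closedBall (0 : (Fin d → Fin d → ℂ) × (Fin d → ℝ)) (CA + 1)).tendsto_subseq hxmem
  obtain ⟨Ql, hQldef⟩ : ∃ Ql : Matrix (Fin d) (Fin d) ℂ, Ql = Matrix.of lim.1 := ⟨_, rfl⟩
  obtain ⟨μl, hμldef⟩ : ∃ μl : Fin d → ℝ, μl = lim.2 := ⟨_, rfl⟩
  -- entrywise limits
  have hQc : ∀ i j, Filter.Tendsto (fun k => Qs (ψ (φ k)) i j) Filter.atTop (𝓝 (Ql i j)) := by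
    intro i j
    have hcont : Continuous (fun y : (Fin d → Fin d → ℂ) × (Fin d → ℝ) => y.1 i j) := by
      fun_prop
    rw [hQldef]
    exact (hcont.tendsto lim).comp hconv
  have hμc : ∀ i, Filter.Tendsto (fun k => μs (ψ (φ k)) i) Filter.atTop (𝓝 (μl i)) := by
    intro i
    have hcont : Continuous (fun y : (Fin d → Fin d → ℂ) × (Fin d → ℝ) => y.2 i) := by
      fun_prop
    rw [hμldef]
    exact (hcont.tendsto lim).comp hconv
  have hnkk : ∀ k : ℕ, k ≤ ψ (φ k) := fun k => le_trans hφ.le_apply hψ.le_apply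
  have hBc : ∀ i j, Filter.Tendsto (fun k => B (ψ (φ k)) i j) Filter.atTop (𝓝 (A i j)) := by
    intro i j
    rw [← tendsto_sub_nhds_zero_iff]
    have hbound : ∀ k : ℕ, ‖B (ψ (φ k)) i j - A i j‖ ≤ 1 / ((k : ℝ) + 1) := by
      intro k
      have h1 := hBclose (ψ (φ k)) i j
      have h2 : (1 : ℝ) / ((ψ (φ k) : ℝ) + 1) ≤ 1 / ((k : ℝ) + 1) := by
        apply one_div_le_one_div_of_le (by positivity)
        have := hnkk k
        have hc : (k : ℝ) ≤ (ψ (φ k) : ℝ) := by exact_mod_cast this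
        linarith
      rw [norm_sub_rev] at h1
      linarith
    exact squeeze_zero_norm hbound tendsto_one_div_add_atTop_nhds_zero_nat
  have hQHc : ∀ i j, Filter.Tendsto (fun k => (Qs (ψ (φ k)))ᴴ i j) Filter.atTop (𝓝 (Qlᴴ i j)) := by
    intro i j
    simp only [Matrix.conjTranspose_apply]
    exact (hQc j i).star
  have hmul : ∀ {M N : ℕ → Matrix (Fin d) (Fin d) ℂ} {Mo No : Matrix (Fin d) (Fin d) ℂ},
      (∀ i j, Filter.Tendsto (fun k => M k i j) Filter.atTop (𝓝 (Mo i j))) →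
      (∀ i j, Filter.Tendsto (fun k => N k i j) Filter.atTop (𝓝 (No i j))) →
      ∀ i j, Filter.Tendsto (fun k => (M k * N k) i j) Filter.atTop (𝓝 ((Mo * No) i j)) := by
    intro M N Mo No hM hN i j
    simp only [Matrix.mul_apply]
    exact tendsto_finset_sum _ fun c _ => (hM i c).mul (hN c j)
  have hdiagc : ∀ i j, Filter.Tendsto
      (fun k => (Matrix.diagonal (fun i => ((μs (ψ (φ k)) i : ℝ) : ℂ))) i j) Filter.atTop
      (𝓝 ((Matrix.diagonal (fun i => ((μl i : ℝ) : ℂ))) i j)) := by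
    intro i j
    by_cases hij : i = j
    · subst hij
      simp only [Matrix.diagonal_apply_eq]
      exact (Complex.continuous_ofReal.tendsto _).comp (hμc i)
    · simp only [Matrix.diagonal_apply_ne _ hij]
      exact tendsto_const_nhds
  -- limit identities
  have hQl1 : Ql * Qlᴴ = 1 := by
    ext i j
    have h7 : Filter.Tendsto (fun _ : ℕ => (1 : Matrix (Fin d) (Fin d) ℂ) i j) Filter.atTop
        (𝓝 ((Ql * Qlᴴ) i j)) :=
      (hmul hQc hQHc i j).congr fun k => by rw [hQ1 (ψ (φ k))]
    exact tendsto_nhds_unique h7 tendsto_const_nhds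
  have hQl2 : Qlᴴ * Ql = 1 := by
    ext i j
    have h7 : Filter.Tendsto (fun _ : ℕ => (1 : Matrix (Fin d) (Fin d) ℂ) i j) Filter.atTop
        (𝓝 ((Qlᴴ * Ql) i j)) :=
      (hmul hQHc hQc i j).congr fun k => by rw [hQ2 (ψ (φ k))]
    exact tendsto_nhds_unique h7 tendsto_const_nhds
  have hAeq : A = Ql * Matrix.diagonal (fun i => ((μl i : ℝ) : ℂ)) * Qlᴴ := by
    ext i j
    have h6 := hmul (hmul hQc hdiagc) hQHc i j
    have h5 : Filter.Tendsto (fun k => B (ψ (φ k)) i j) Filter.atTop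
        (𝓝 ((Ql * Matrix.diagonal (fun i => ((μl i : ℝ) : ℂ)) * Qlᴴ) i j)) :=
      h6.congr fun k => by rw [← hBeq (ψ (φ k))]
    exact tendsto_nhds_unique (hBc i j) h5
  -- pattern facts
  have hRk : ∀ k b b', μs (ψ (φ k)) b = μs (ψ (φ k)) b' ↔ R b b' = true := by
    intro k b b'
    have h0 := congrFun (congrFun (hψR (φ k)) b) b'
    rw [← h0, decide_eq_true_eq]
  have hlimR : ∀ b b', R b b' = true → μl b = μl b' := by
    intro b b' hbb'
    refine tendsto_nhds_unique (hμc b) ?_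
    have he : (fun k => μs (ψ (φ k)) b) = fun k => μs (ψ (φ k)) b' :=
      funext fun k => (hRk k b b').mpr hbb'
    rw [he]
    exact hμc b'
  have hfgk : ∀ k b b', μs (ψ (φ k)) b = μs (ψ (φ k)) b' → μl b = μl b' :=
    fun k b b' h => hlimR b b' ((hRk k b b').mp h)
  -- spectrum counts
  have hAspec' : (Finset.univ.image μl).card = d + r - ∑ j, ll j := by
    have hs := spectrum_unitary_diag hQl1 hQl2 μl
    rw [← hAeq] at hs
    exact hs.symm.trans hAspec
  have hμk_card : ∀ k, (Finset.univ.image (μs (ψ (φ k)))).card + ∑ j, ll j ≤ d + r :=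
    fun k => collision_image_card (hcoll (ψ (φ k)))
  have hpatk : ∀ k, ∀ b b', μl b = μl b' → μs (ψ (φ k)) b = μs (ψ (φ k)) b' := by
    intro k
    refine (image_card_le_and_pattern (hfgk k)).2 ?_
    have h1 := hμk_card k
    omega
  have hspeck : ∀ k, (spectrum ℂ (B (ψ (φ k)))).ncard = d + r - ∑ j, ll j := by
    intro k
    rw [hBeq (ψ (φ k)), spectrum_unitary_diag (hQ1 _) (hQ2 _)]
    have h2 := (image_card_le_and_pattern (hfgk k)).1
    have h1 := hμk_card k
    omega
  -- the unitary U
  obtain ⟨U, hUdef⟩ : ∃ U : Matrix (Fin d) (Fin d) ℂ, U = Pᴴ * Ql := ⟨_, rfl⟩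
  have hU1 : U * Uᴴ = 1 := by
    rw [hUdef, Matrix.conjTranspose_mul, Matrix.conjTranspose_conjTranspose]
    calc Pᴴ * Ql * (Qlᴴ * P) = Pᴴ * (Ql * Qlᴴ) * P := by simp only [Matrix.mul_assoc]
    _ = 1 := by rw [hQl1, Matrix.mul_one]; exact hP.2
  have hU2 : Uᴴ * U = 1 := by
    rw [hUdef, Matrix.conjTranspose_mul, Matrix.conjTranspose_conjTranspose]
    calc Qlᴴ * P * (Pᴴ * Ql) = Qlᴴ * (P * Pᴴ) * Ql := by simp only [Matrix.mul_assoc]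
    _ = 1 := by rw [hP.1, Matrix.mul_one]; exact hQl2
  have hUdiag : U * Matrix.diagonal (fun i => ((μl i : ℝ) : ℂ))
      = Matrix.diagonal (fun i => ((D i : ℝ) : ℂ)) * U := by
    have h0 : P * Matrix.diagonal (fun i => ((D i : ℝ) : ℂ)) * Pᴴ
        = Ql * Matrix.diagonal (fun i => ((μl i : ℝ) : ℂ)) * Qlᴴ := by rw [← hPD, hAeq]
    calc U * Matrix.diagonal (fun i => ((μl i : ℝ) : ℂ))
        = (Pᴴ * Ql) * Matrix.diagonal (fun i => ((μl i : ℝ) : ℂ)) * (Qlᴴ * Ql) := by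
          rw [hQl2, Matrix.mul_one, hUdef]
    _ = Pᴴ * (Ql * Matrix.diagonal (fun i => ((μl i : ℝ) : ℂ)) * Qlᴴ) * Ql := by
          simp only [Matrix.mul_assoc]
    _ = Pᴴ * (P * Matrix.diagonal (fun i => ((D i : ℝ) : ℂ)) * Pᴴ) * Ql := by rw [h0]
    _ = (Pᴴ * P) * Matrix.diagonal (fun i => ((D i : ℝ) : ℂ)) * (Pᴴ * Ql) := by
          simp only [Matrix.mul_assoc]
    _ = Matrix.diagonal (fun i => ((D i : ℝ) : ℂ)) * U := by rw [hP.2, one_mul, hUdef]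
  have hUentry : ∀ a c, U a c ≠ 0 → D a = μl c := by
    intro a c h
    have h0 := congrArg (fun M : Matrix (Fin d) (Fin d) ℂ => M a c) hUdiag
    simp only [Matrix.mul_diagonal, Matrix.diagonal_mul] at h0
    have h1 : ((μl c : ℝ) : ℂ) = ((D a : ℝ) : ℂ) := by
      apply mul_left_cancel₀ h
      rw [h0, mul_comm]
    exact (Complex.ofReal_injective h1).symm
  have hrow : ∀ a, ∃ c, U a c ≠ 0 := by
    intro a
    by_contra hno
    push_neg at hno
    have h0 : (U * Uᴴ) a a = 0 := by
      rw [Matrix.mul_apply]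
      apply Finset.sum_eq_zero
      intro c _
      rw [hno c, zero_mul]
    rw [hU1, Matrix.one_apply_eq] at h0
    exact one_ne_zero h0
  choose bsel hbsel using hrow
  have hDb : ∀ a, D a = μl (bsel a) := fun a => hUentry a (bsel a) (hbsel a)
  -- decomposition for each k
  have hsemi : ∀ k, Matrix.diagonal (fun i => ((μs (ψ (φ k)) (bsel i) : ℝ) : ℂ)) * U
      = U * Matrix.diagonal (fun i => ((μs (ψ (φ k)) i : ℝ) : ℂ)) := by
    intro k
    ext a c
    rw [Matrix.diagonal_mul, Matrix.mul_diagonal]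
    by_cases h : U a c = 0
    · rw [h, mul_zero, zero_mul]
    · have h2 : μl (bsel a) = μl c := by rw [← hDb a]; exact hUentry a c h
      have h3 : μs (ψ (φ k)) (bsel a) = μs (ψ (φ k)) c := hpatk k _ _ h2
      rw [h3, mul_comm]
  have hQkU1 : ∀ k, (Qs (ψ (φ k)) * Uᴴ) * (Qs (ψ (φ k)) * Uᴴ)ᴴ = 1 := by
    intro k
    rw [Matrix.conjTranspose_mul, Matrix.conjTranspose_conjTranspose]
    calc (Qs (ψ (φ k)) * Uᴴ) * (U * (Qs (ψ (φ k)))ᴴ)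
        = Qs (ψ (φ k)) * (Uᴴ * U) * (Qs (ψ (φ k)))ᴴ := by simp only [Matrix.mul_assoc]
    _ = 1 := by rw [hU2, Matrix.mul_one]; exact hQ1 _
  have hQkU2 : ∀ k, (Qs (ψ (φ k)) * Uᴴ)ᴴ * (Qs (ψ (φ k)) * Uᴴ) = 1 := by
    intro k
    rw [Matrix.conjTranspose_mul, Matrix.conjTranspose_conjTranspose]
    calc (U * (Qs (ψ (φ k)))ᴴ) * (Qs (ψ (φ k)) * Uᴴ)
        = U * ((Qs (ψ (φ k)))ᴴ * Qs (ψ (φ k))) * Uᴴ := by simp only [Matrix.mul_assoc]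
    _ = 1 := by rw [hQ2, Matrix.mul_one]; exact hU1
  have hQkdec : ∀ k, B (ψ (φ k)) = (Qs (ψ (φ k)) * Uᴴ)
      * Matrix.diagonal (fun i => ((μs (ψ (φ k)) (bsel i) : ℝ) : ℂ))
      * (Qs (ψ (φ k)) * Uᴴ)ᴴ := by
    intro k
    have key : Uᴴ * (Matrix.diagonal (fun i => ((μs (ψ (φ k)) (bsel i) : ℝ) : ℂ)) * U)
        = Matrix.diagonal (fun i => ((μs (ψ (φ k)) i : ℝ) : ℂ)) := by
      rw [hsemi k, ← Matrix.mul_assoc, hU2, one_mul]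
    rw [Matrix.conjTranspose_mul, Matrix.conjTranspose_conjTranspose]
    calc B (ψ (φ k))
        = Qs (ψ (φ k)) * Matrix.diagonal (fun i => ((μs (ψ (φ k)) i : ℝ) : ℂ))
          * (Qs (ψ (φ k)))ᴴ := hBeq (ψ (φ k))
    _ = Qs (ψ (φ k))
          * (Uᴴ * (Matrix.diagonal (fun i => ((μs (ψ (φ k)) (bsel i) : ℝ) : ℂ)) * U))
          * (Qs (ψ (φ k)))ᴴ := by rw [key]
    _ = Qs (ψ (φ k)) * Uᴴ * Matrix.diagonal (fun i => ((μs (ψ (φ k)) (bsel i) : ℝ) : ℂ))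
          * (U * (Qs (ψ (φ k)))ᴴ) := by simp only [Matrix.mul_assoc]
  -- convergence of the new data
  have hFc : ∀ a, Filter.Tendsto (fun k => μs (ψ (φ k)) (bsel a)) Filter.atTop (𝓝 (D a)) := by
    intro a
    rw [hDb a]
    exact hμc (bsel a)
  have hPUc : ∀ i j, Filter.Tendsto (fun k => (Qs (ψ (φ k)) * Uᴴ) i j) Filter.atTop
      (𝓝 (P i j)) := by
    have hUc : ∀ i j, Filter.Tendsto (fun _ : ℕ => (Uᴴ : Matrix (Fin d) (Fin d) ℂ) i j)
        Filter.atTop (𝓝 (Uᴴ i j)) := fun i j => tendsto_const_nhds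
    have h1 := hmul hQc hUc
    have h2 : Ql * Uᴴ = P := by
      rw [hUdef, Matrix.conjTranspose_mul, Matrix.conjTranspose_conjTranspose]
      calc Ql * (Qlᴴ * P) = (Ql * Qlᴴ) * P := by rw [Matrix.mul_assoc]
      _ = P := by rw [hQl1, one_mul]
    intro i j
    exact h2 ▸ h1 i j
  -- eventual closeness
  have hev1 : ∀ᶠ k in Filter.atTop, ∀ a, |D a - μs (ψ (φ k)) (bsel a)| < ε := by
    rw [Filter.eventually_all]
    intro a
    have hh := Metric.tendsto_nhds.mp (hFc a) ε hε
    filter_upwards [hh] with k hk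
    rw [Real.dist_eq] at hk
    rw [abs_sub_comm]
    exact hk
  have hev2 : ∀ᶠ k in Filter.atTop, ∀ i j, ‖(Qs (ψ (φ k)) * Uᴴ) i j - P i j‖ < ε := by
    rw [Filter.eventually_all]
    intro i
    rw [Filter.eventually_all]
    intro j
    have hh := Metric.tendsto_nhds.mp (hPUc i j) ε hε
    filter_upwards [hh] with k hk
    rwa [Complex.dist_eq] at hk
  obtain ⟨k, hk1, hk2⟩ := (hev1.and hev2).exists
  exact hBbad (ψ (φ k)) ⟨hspeck k, Qs (ψ (φ k)) * Uᴴ, fun a => μs (ψ (φ k)) (bsel a),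
    hQkU1 k, hQkU2 k, hQkdec k, hk1, hk2⟩


end
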